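/- Let A, B, C, D, E be matrices over a semiring with compatible sizes such that the block products below make sense. Then [[A, B, C],[0, 0, D],[0, 0, E]] equals the product [[I, C],[0, D],[0, E]] · [[A, B, 0],[0, 0, I]], and the reversed product [[A, B, 0],[0, 0, I]] · [[I, C],[0, D],[0, E]] equals [[A, AC+BD],[0, E]]. Consequently, the block matrix [[A, B, C],[0, 0, D],[0, 0, E]] with a zero middle diagonal block is elementarily strong-shift-equivalent to [[A, AC+BD],[0, E]]. -/

import Mathlib

open Matrix

/-- elimination of a zero middle diagonal block by an elementary
strong shift equivalence over a semiring. -/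
theorem esse_eliminate_zero_block {α : Type*} [Semiring α] {a b c : ℕ}
    (A : Matrix (Fin a) (Fin a) α) (B : Matrix (Fin a) (Fin b) α)
    (C : Matrix (Fin a) (Fin c) α) (D : Matrix (Fin b) (Fin c) α)
    (E : Matrix (Fin c) (Fin c) α) :
    let big : Matrix (Fin a ⊕ (Fin b ⊕ Fin c)) (Fin a ⊕ (Fin b ⊕ Fin c)) α :=
      Matrix.fromBlocks A (Matrix.fromCols B C) 0 (Matrix.fromBlocks 0 D 0 E)
    let F₁ : Matrix (Fin a ⊕ (Fin b ⊕ Fin c)) (Fin a ⊕ Fin c) α :=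
      Matrix.fromBlocks 1 C 0 (Matrix.fromRows D E)
    let F₂ : Matrix (Fin a ⊕ Fin c) (Fin a ⊕ (Fin b ⊕ Fin c)) α :=
      Matrix.fromBlocks A (Matrix.fromCols B 0) 0 (Matrix.fromCols 0 1)
    let small : Matrix (Fin a ⊕ Fin c) (Fin a ⊕ Fin c) α :=
      Matrix.fromBlocks A (A * C + B * D) 0 E
    big = F₁ * F₂ ∧ F₂ * F₁ = small ∧
      ∃ (R : Matrix (Fin a ⊕ (Fin b ⊕ Fin c)) (Fin a ⊕ Fin c) α)
        (S : Matrix (Fin a ⊕ Fin c) (Fin a ⊕ (Fin b ⊕ Fin c)) α),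
        big = R * S ∧ small = S * R := by
  intro big F₁ F₂ small
  have h1 : big = F₁ * F₂ := by
    simp [big, F₁, F₂, fromBlocks_multiply, fromRows_mul_fromCols,
      mul_fromCols]
    constructor
    · ext i (j|j) <;> simp [fromCols]
    · ext (i|i) (j|j) <;> simp [fromCols, fromBlocks, fromRows_apply_inl, fromRows_apply_inr]
  have h2 : F₂ * F₁ = small := by
    simp [small, F₁, F₂, fromBlocks_multiply, fromCols_mul_fromRows]
  exact ⟨h1, h2, F₁, F₂, h1, h2.symm⟩
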